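/- arXiv:2303.10117 — 2 statements merged into one kernel-verified Lean document; each statement's English description precedes it below -/
import Mathlib

section
/- Let G₁, …, G_K be a partition of {1,…,N} and Ĝ₁, …, Ĝ_K another partition. Suppose there is a symmetric distance D̂ : {1,…,N}² → ℝ such that max over pairs (i,j) lying in a common true group G_k of D̂_{ij} is strictly less than the min of D̂_{ij} over pairs in distinct true groups. Then single-linkage agglomerative clustering on D̂, stopped at K clusters, recovers exactly the partition {G₁,…,G_K}. -/
/-- Single-linkage distance between two clusters: the minimum pairwise distance. -/
noncomputable def singleLinkDist {N : ℕ} (D : Fin N → Fin N → ℝ)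
    (A B : Finset (Fin N)) : ℝ :=
  sInf {r : ℝ | ∃ i ∈ A, ∃ j ∈ B, r = D i j}

/-- One step of single-linkage agglomerative clustering: merge two distinct clusters
of `P` at minimal single-linkage distance. -/
def IsMergeStep {N : ℕ} (D : Fin N → Fin N → ℝ)
    (P Q : Finset (Finset (Fin N))) : Prop :=
  ∃ A ∈ P, ∃ B ∈ P, A ≠ B ∧
    (∀ A' ∈ P, ∀ B' ∈ P, A' ≠ B' → singleLinkDist D A B ≤ singleLinkDist D A' B') ∧
    Q = insert (A ∪ B) ((P.erase A).erase B)

lemma sld_finite {N : ℕ} (D : Fin N → Fin N → ℝ) (A B : Finset (Fin N)) :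
    {r : ℝ | ∃ i ∈ A, ∃ j ∈ B, r = D i j}.Finite := by
  apply Set.Finite.subset (Set.finite_range (fun p : Fin N × Fin N => D p.1 p.2))
  rintro r ⟨i, _, j, _, rfl⟩
  exact ⟨(i, j), rfl⟩

lemma sld_le {N : ℕ} (D : Fin N → Fin N → ℝ) {A B : Finset (Fin N)}
    {i j : Fin N} (hi : i ∈ A) (hj : j ∈ B) : singleLinkDist D A B ≤ D i j :=
  csInf_le ((sld_finite D A B).bddBelow) ⟨i, hi, j, hj, rfl⟩

lemma sld_mem {N : ℕ} (D : Fin N → Fin N → ℝ) {A B : Finset (Fin N)}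
    (hA : A.Nonempty) (hB : B.Nonempty) :
    ∃ i ∈ A, ∃ j ∈ B, singleLinkDist D A B = D i j := by
  obtain ⟨a, ha⟩ := hA; obtain ⟨b, hb⟩ := hB
  have hne : {r : ℝ | ∃ i ∈ A, ∃ j ∈ B, r = D i j}.Nonempty := ⟨D a b, a, ha, b, hb, rfl⟩
  exact hne.csInf_mem (sld_finite D A B)

/-- If the maximal within-group distance is strictly smaller than the
minimal between-group distance, then single-linkage agglomerative clustering started
from singletons and stopped at `K` clusters recovers exactly the true partition
`{G₁,…,G_K}`. -/
theorem single_linkage_recovers_partition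
    {N K : ℕ} (hK : 1 ≤ K) (hKN : K ≤ N)
    (D : Fin N → Fin N → ℝ)
    (hDsymm : ∀ i j, D i j = D j i)
    (G : Fin K → Finset (Fin N))
    (hGne : ∀ k, (G k).Nonempty)
    (hGdisj : ∀ k l, k ≠ l → Disjoint (G k) (G l))
    (hGcover : ∀ i : Fin N, ∃ k, i ∈ G k)
    (hsep : ∀ k : Fin K, ∀ i ∈ G k, ∀ j ∈ G k,
      ∀ k' l' : Fin K, k' ≠ l' → ∀ i' ∈ G k', ∀ j' ∈ G l', D i j < D i' j')
    (f : ℕ → Finset (Finset (Fin N)))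
    (hf0 : f 0 = Finset.univ.image (fun i : Fin N => ({i} : Finset (Fin N))))
    (hstep : ∀ m < N - K, IsMergeStep D (f m) (f (m + 1))) :
    f (N - K) = Finset.univ.image G := by
  classical
  -- the invariant
  set Good : Finset (Finset (Fin N)) → Prop := fun P =>
    (∀ A ∈ P, A.Nonempty) ∧
    (∀ A ∈ P, ∀ B ∈ P, A ≠ B → Disjoint A B) ∧
    (∀ i : Fin N, ∃ A ∈ P, i ∈ A) ∧
    (∀ A ∈ P, ∃ k, A ⊆ G k) with hGood
  have key : ∀ m, m ≤ N - K → Good (f m) ∧ (f m).card = N - m := by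
    intro m
    induction m with
    | zero =>
      intro _
      constructor
      · rw [hGood, hf0]
        refine ⟨?_, ?_, ?_, ?_⟩
        · rintro A hA
          simp only [Finset.mem_image] at hA
          obtain ⟨i, _, rfl⟩ := hA
          exact Finset.singleton_nonempty i
        · rintro A hA B hB hne
          simp only [Finset.mem_image] at hA hB
          obtain ⟨i, _, rfl⟩ := hA; obtain ⟨j, _, rfl⟩ := hB
          simp only [Finset.disjoint_singleton]
          intro h; exact hne (by rw [h])
        · intro i
          exact ⟨{i}, Finset.mem_image_of_mem _ (Finset.mem_univ i), Finset.mem_singleton_self i⟩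
        · rintro A hA
          simp only [Finset.mem_image] at hA
          obtain ⟨i, _, rfl⟩ := hA
          obtain ⟨k, hk⟩ := hGcover i
          exact ⟨k, Finset.singleton_subset_iff.mpr hk⟩
      · rw [hf0]
        rw [Finset.card_image_of_injective _ (fun i j h => by
          simpa using h)]
        simp
    | succ m ih =>
      intro hm
      have hm' : m < N - K := by omega
      obtain ⟨hgood, hcard⟩ := ih (by omega)
      obtain ⟨hne, hdisj, hcover, hsub⟩ := hgood
      obtain ⟨A, hA, B, hB, hAB, hmin, hQ⟩ := hstep m hm'
      -- pigeonhole: two distinct clusters inside the same group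
      have hcardK : K < (f m).card := by omega
      set g : Finset (Fin N) → Fin K := fun C =>
        if h : ∃ k, C ⊆ G k then h.choose else ⟨0, hK⟩ with hg
      have hgspec : ∀ C ∈ f m, C ⊆ G (g C) := by
        intro C hC
        have h := hsub C hC
        rw [hg]; simp only [h, dif_pos]
        exact h.choose_spec
      obtain ⟨C, hC, C', hC', hCC', hgeq⟩ :=
        Finset.exists_ne_map_eq_of_card_lt_of_maps_to (t := (Finset.univ : Finset (Fin K)))
          (by simpa using hcardK) (fun C _ => Finset.mem_univ (g C))
      -- the within-group linkage value
      obtain ⟨i, hi, j, hj, hij⟩ := sld_mem D (hne C hC) (hne C' hC')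
      have hwithin : i ∈ G (g C) ∧ j ∈ G (g C) :=
        ⟨hgspec C hC hi, hgeq ▸ hgspec C' hC' hj⟩
      -- the merged pair lies in a common group
      obtain ⟨a, ha, b, hb, hab⟩ := sld_mem D (hne A hA) (hne B hB)
      have hkl : g A = g B := by
        by_contra hne'
        have h1 : singleLinkDist D A B ≤ singleLinkDist D C C' := hmin C hC C' hC' hCC'
        have h2 : D i j < D a b :=
          hsep (g C) i hwithin.1 j hwithin.2 (g A) (g B) hne' a (hgspec A hA ha) b (hgspec B hB hb)
        rw [hij, hab] at h1
        linarith
      -- A ∪ B is a fresh cluster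
      have hABsub : A ∪ B ⊆ G (g A) := by
        intro x hx
        rcases Finset.mem_union.mp hx with h | h
        · exact hgspec A hA h
        · exact hkl ▸ hgspec B hB h
      have hnotmem : A ∪ B ∉ (Finset.erase (Finset.erase (f m) A) B) := by
        intro h
        have h1 : A ∪ B ∈ f m := Finset.mem_of_mem_erase (Finset.mem_of_mem_erase h)
        have h2 : A ∪ B ≠ A := Finset.ne_of_mem_erase (Finset.mem_of_mem_erase h)
        have hd := hdisj A hA (A ∪ B) h1 (fun e => h2 e.symm)
        obtain ⟨x, hx⟩ := hne A hA
        exact (Finset.disjoint_left.mp hd hx) (Finset.mem_union_left _ hx)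
      have hBerase : B ∈ (f m).erase A := Finset.mem_erase.mpr ⟨fun e => hAB e.symm, hB⟩
      constructor
      · rw [hGood]
        refine ⟨?_, ?_, ?_, ?_⟩
        · intro X hX
          rw [hQ] at hX
          rcases Finset.mem_insert.mp hX with rfl | hX
          · obtain ⟨x, hx⟩ := hne A hA
            exact ⟨x, Finset.mem_union_left _ hx⟩
          · exact hne X (Finset.mem_of_mem_erase (Finset.mem_of_mem_erase hX))
        · intro X hX Y hY hXY
          rw [hQ] at hX hY
          have hAux : ∀ Z, Z ∈ (Finset.erase (Finset.erase (f m) A) B) →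
              Disjoint (A ∪ B) Z := by
            intro Z hZ
            have hZm : Z ∈ f m := Finset.mem_of_mem_erase (Finset.mem_of_mem_erase hZ)
            have hZA : Z ≠ A := Finset.ne_of_mem_erase (Finset.mem_of_mem_erase hZ)
            have hZB : Z ≠ B := Finset.ne_of_mem_erase hZ
            exact Finset.disjoint_union_left.mpr
              ⟨hdisj A hA Z hZm (fun e => hZA e.symm), hdisj B hB Z hZm (fun e => hZB e.symm)⟩
          rcases Finset.mem_insert.mp hX with rfl | hX
          · rcases Finset.mem_insert.mp hY with rfl | hY
            · exact absurd rfl hXY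
            · exact hAux Y hY
          · rcases Finset.mem_insert.mp hY with rfl | hY
            · exact (hAux X hX).symm
            · exact hdisj X (Finset.mem_of_mem_erase (Finset.mem_of_mem_erase hX))
                Y (Finset.mem_of_mem_erase (Finset.mem_of_mem_erase hY)) hXY
        · intro x
          obtain ⟨C₀, hC₀, hx⟩ := hcover x
          by_cases hCA : C₀ = A
          · refine ⟨A ∪ B, ?_, Finset.mem_union_left _ (hCA ▸ hx)⟩
            rw [hQ]; exact Finset.mem_insert_self _ _
          by_cases hCB : C₀ = B
          · refine ⟨A ∪ B, ?_, Finset.mem_union_right _ (hCB ▸ hx)⟩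
            rw [hQ]; exact Finset.mem_insert_self _ _
          · refine ⟨C₀, ?_, hx⟩
            rw [hQ]
            exact Finset.mem_insert_of_mem
              (Finset.mem_erase.mpr ⟨hCB, Finset.mem_erase.mpr ⟨hCA, hC₀⟩⟩)
        · intro X hX
          rw [hQ] at hX
          rcases Finset.mem_insert.mp hX with rfl | hX
          · exact ⟨g A, hABsub⟩
          · exact hsub X (Finset.mem_of_mem_erase (Finset.mem_of_mem_erase hX))
      · rw [hQ, Finset.card_insert_of_notMem hnotmem,
          Finset.card_erase_of_mem hBerase, Finset.card_erase_of_mem hA, hcard]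
        omega
  -- conclude at m = N - K
  obtain ⟨⟨hne, hdisj, hcover, hsub⟩, hcard⟩ := key (N - K) le_rfl
  have hcardK : (f (N - K)).card = K := by omega
  set g : Finset (Fin N) → Fin K := fun C =>
    if h : ∃ k, C ⊆ G k then h.choose else ⟨0, hK⟩ with hg
  have hgspec : ∀ C ∈ f (N - K), C ⊆ G (g C) := by
    intro C hC
    have h := hsub C hC
    rw [hg]; simp only [h, dif_pos]
    exact h.choose_spec
  -- every point of G k lies in a cluster mapped to k
  have hfind : ∀ k : Fin K, ∀ i ∈ G k, ∃ C ∈ f (N - K), i ∈ C ∧ g C = k := by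
    intro k i hi
    obtain ⟨C, hC, hiC⟩ := hcover i
    refine ⟨C, hC, hiC, ?_⟩
    by_contra hne'
    exact (Finset.disjoint_left.mp (hGdisj _ _ hne') (hgspec C hC hiC)) hi
  -- g is injective on f (N-K)
  have hsurj : Finset.image g (f (N - K)) = Finset.univ := by
    refine Finset.eq_univ_iff_forall.mpr fun k => ?_
    obtain ⟨i, hi⟩ := hGne k
    obtain ⟨C, hC, _, hgC⟩ := hfind k i hi
    exact Finset.mem_image.mpr ⟨C, hC, hgC⟩
  have hinj : Set.InjOn g (f (N - K)) := by
    apply Finset.injOn_of_card_image_eq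
    rw [hsurj, Finset.card_univ, Fintype.card_fin, hcardK]
  -- each cluster equals its group
  have hCeq : ∀ C ∈ f (N - K), C = G (g C) := by
    intro C hC
    apply Finset.Subset.antisymm (hgspec C hC)
    intro j hj
    obtain ⟨C', hC', hjC', hgC'⟩ := hfind (g C) j hj
    exact hinj (Finset.mem_coe.mpr hC') (Finset.mem_coe.mpr hC) hgC' ▸ hjC'
  apply Finset.Subset.antisymm
  · intro C hC
    rw [hCeq C hC]
    exact Finset.mem_image_of_mem G (Finset.mem_univ _)
  · intro X hX
    obtain ⟨k, _, rfl⟩ := Finset.mem_image.mp hX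
    obtain ⟨i, hi⟩ := hGne k
    obtain ⟨C, hC, _, hgC⟩ := hfind k i hi
    rw [← hgC, ← hCeq C hC]
    exact hC
end

section
/- With a₁, a₂, Δ₁, Δ₂, n₁, n₂, a* as above, suppose additionally that all eigenvalues of Δ₁ and Δ₂ lie in [λ̲, λ̄] with 0 < λ̲ ≤ λ̄. Then n₁|a₁ − a*|² + n₂|a₂ − a*|² ≥ (λ̲/λ̄)²·(n₁n₂/(n₁+n₂))·|a₁ − a₂|². -/
open Matrix

private lemma dot_self_nonneg' {d : ℕ} (x : Fin d → ℝ) : 0 ≤ x ⬝ᵥ x :=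
  Finset.sum_nonneg fun i _ => mul_self_nonneg (x i)

private lemma cs_form {d : ℕ} (M : Matrix (Fin d) (Fin d) ℝ)
    (hsym : ∀ x y : Fin d → ℝ, x ⬝ᵥ M *ᵥ y = y ⬝ᵥ M *ᵥ x)
    (hpos : ∀ x : Fin d → ℝ, 0 ≤ x ⬝ᵥ M *ᵥ x) (x y : Fin d → ℝ) :
    (x ⬝ᵥ M *ᵥ y) ^ 2 ≤ (x ⬝ᵥ M *ᵥ x) * (y ⬝ᵥ M *ᵥ y) := by
  have h : ∀ t : ℝ, 0 ≤ (y ⬝ᵥ M *ᵥ y) * (t * t) + (2 * (x ⬝ᵥ M *ᵥ y)) * t + (x ⬝ᵥ M *ᵥ x) := by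
    intro t
    have h0 := hpos (x + t • y)
    have hyx := hsym y x
    simp only [mulVec_add, mulVec_smul, dotProduct_add, add_dotProduct, smul_dotProduct,
      dotProduct_smul, smul_eq_mul] at h0
    rw [hyx] at h0
    have he : (y ⬝ᵥ M *ᵥ y) * (t * t) + (2 * (x ⬝ᵥ M *ᵥ y)) * t + (x ⬝ᵥ M *ᵥ x)
        = x ⬝ᵥ M *ᵥ x + t * (x ⬝ᵥ M *ᵥ y) + t * (x ⬝ᵥ M *ᵥ y + t * (y ⬝ᵥ M *ᵥ y)) := by
      ring
    rw [he]
    linarith [h0]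
  have hd := discrim_le_zero h
  rw [discrim] at hd
  nlinarith [hd]

private lemma cs_dot' {d : ℕ} (x y : Fin d → ℝ) :
    (x ⬝ᵥ y) ^ 2 ≤ (x ⬝ᵥ x) * (y ⬝ᵥ y) := by
  have := cs_form (1 : Matrix (Fin d) (Fin d) ℝ)
    (fun a b => by rw [one_mulVec, one_mulVec, dotProduct_comm])
    (fun a => by rw [one_mulVec]; exact dot_self_nonneg' a) x y
  simpa [one_mulVec] using this

private lemma final_calc (lo hi n₁ n₂ U V₁ V₂ W₁ W₂ : ℝ)
    (hlo : 0 < lo) (hhi : 0 < hi) (hn₁ : 0 < n₁) (hn₂ : 0 < n₂)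
    (hUnn : 0 ≤ U) (hV₁nn : 0 ≤ V₁) (hV₂nn : 0 ≤ V₂)
    (A2 : n₂ ^ 2 * W₂ ≤ ((n₁ + n₂) * hi) ^ 2 * V₁)
    (A1 : n₁ ^ 2 * W₁ ≤ ((n₁ + n₂) * hi) ^ 2 * V₂)
    (B2 : lo ^ 2 * U ^ 2 ≤ U * W₂)
    (B1 : lo ^ 2 * U ^ 2 ≤ U * W₁) :
    (lo / hi) ^ 2 * (n₁ * n₂ / (n₁ + n₂)) * U ≤ n₁ * V₁ + n₂ * V₂ := by
  have hn12 : 0 < n₁ + n₂ := by linarith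
  rcases eq_or_lt_of_le hUnn with hU0 | hUp
  · rw [← hU0]
    have h0 : (lo / hi) ^ 2 * (n₁ * n₂ / (n₁ + n₂)) * 0 = 0 := by ring
    rw [h0]
    positivity
  · have hC2 : lo ^ 2 * U ≤ W₂ := by nlinarith [B2, hUp]
    have hC1 : lo ^ 2 * U ≤ W₁ := by nlinarith [B1, hUp]
    have hfin : lo ^ 2 * n₁ * n₂ * U ≤ (n₁ + n₂) * hi ^ 2 * (n₁ * V₁ + n₂ * V₂) := by
      nlinarith [mul_le_mul_of_nonneg_left A2 hn₁.le, mul_le_mul_of_nonneg_left A1 hn₂.le,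
        mul_le_mul_of_nonneg_left hC2 (by positivity : (0:ℝ) ≤ n₁ * n₂ ^ 2),
        mul_le_mul_of_nonneg_left hC1 (by positivity : (0:ℝ) ≤ n₂ * n₁ ^ 2)]
    have heq : (lo / hi) ^ 2 * (n₁ * n₂ / (n₁ + n₂)) * U
        = lo ^ 2 * n₁ * n₂ * U / (hi ^ 2 * (n₁ + n₂)) := by
      rw [eq_div_iff (by positivity : (hi ^ 2 * (n₁ + n₂)) ≠ 0)]
      field_simp
    rw [heq, div_le_iff₀ (by positivity)]
    nlinarith [hfin]

/-- Under-fitting penalty: with eigenvalues of `Δ₁, Δ₂` in `[λ̲, λ̄]`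
and `a* = (n₁Δ₁+n₂Δ₂)⁻¹(n₁Δ₁a₁+n₂Δ₂a₂)`,
`n₁|a₁ − a*|² + n₂|a₂ − a*|² ≥ (λ̲/λ̄)²·(n₁n₂/(n₁+n₂))·|a₁ − a₂|²`. -/
theorem pseudo_coefficient_separation_lower_bound
    {d : ℕ} (Δ₁ Δ₂ : Matrix (Fin d) (Fin d) ℝ)
    (hΔ₁ : Δ₁.PosDef) (hΔ₂ : Δ₂.PosDef)
    (lo hi : ℝ) (hlo : 0 < lo) (hlohi : lo ≤ hi)
    (hΔ₁Eig : ∀ x : Fin d → ℝ,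
      lo * (x ⬝ᵥ x) ≤ x ⬝ᵥ Δ₁.mulVec x ∧ x ⬝ᵥ Δ₁.mulVec x ≤ hi * (x ⬝ᵥ x))
    (hΔ₂Eig : ∀ x : Fin d → ℝ,
      lo * (x ⬝ᵥ x) ≤ x ⬝ᵥ Δ₂.mulVec x ∧ x ⬝ᵥ Δ₂.mulVec x ≤ hi * (x ⬝ᵥ x))
    (n₁ n₂ : ℝ) (hn₁ : 0 < n₁) (hn₂ : 0 < n₂)
    (a₁ a₂ astar : Fin d → ℝ)
    (hastar : astar =
      (n₁ • Δ₁ + n₂ • Δ₂)⁻¹.mulVec (n₁ • Δ₁.mulVec a₁ + n₂ • Δ₂.mulVec a₂)) :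
    (lo / hi) ^ 2 * (n₁ * n₂ / (n₁ + n₂)) * ((a₁ - a₂) ⬝ᵥ (a₁ - a₂)) ≤
      n₁ * ((a₁ - astar) ⬝ᵥ (a₁ - astar)) + n₂ * ((a₂ - astar) ⬝ᵥ (a₂ - astar)) := by
  have hhi : 0 < hi := lt_of_lt_of_le hlo hlohi
  have hn12 : 0 < n₁ + n₂ := by linarith
  have hT₁ : Δ₁ᵀ = Δ₁ := by
    rw [← conjTranspose_eq_transpose_of_trivial]; exact hΔ₁.1
  have hT₂ : Δ₂ᵀ = Δ₂ := by
    rw [← conjTranspose_eq_transpose_of_trivial]; exact hΔ₂.1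
  set M := n₁ • Δ₁ + n₂ • Δ₂ with hMdef
  set u := a₁ - a₂ with hu
  set v₁ := a₁ - astar with hv₁
  set v₂ := a₂ - astar with hv₂
  have hTM : Mᵀ = M := by
    simp [hMdef, transpose_add, transpose_smul, hT₁, hT₂]
  have hsym : ∀ x y : Fin d → ℝ, x ⬝ᵥ M *ᵥ y = y ⬝ᵥ M *ᵥ x := by
    intro x y
    rw [dotProduct_mulVec, ← mulVec_transpose, hTM, dotProduct_comm]
  have hMsplit : ∀ x : Fin d → ℝ,
      x ⬝ᵥ M *ᵥ x = n₁ * (x ⬝ᵥ Δ₁ *ᵥ x) + n₂ * (x ⬝ᵥ Δ₂ *ᵥ x) := by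
    intro x
    simp [hMdef, add_mulVec, smul_mulVec, dotProduct_add, dotProduct_smul]
  have hMlo : ∀ x : Fin d → ℝ, (n₁ + n₂) * lo * (x ⬝ᵥ x) ≤ x ⬝ᵥ M *ᵥ x := by
    intro x
    have h1 := (hΔ₁Eig x).1
    have h2 := (hΔ₂Eig x).1
    rw [hMsplit x]; nlinarith
  have hMhi : ∀ x : Fin d → ℝ, x ⬝ᵥ M *ᵥ x ≤ (n₁ + n₂) * hi * (x ⬝ᵥ x) := by
    intro x
    have h1 := (hΔ₁Eig x).2
    have h2 := (hΔ₂Eig x).2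
    rw [hMsplit x]; nlinarith
  have hMpos : ∀ x : Fin d → ℝ, 0 ≤ x ⬝ᵥ M *ᵥ x := by
    intro x
    exact le_trans (mul_nonneg (by positivity) (dot_self_nonneg' x)) (hMlo x)
  -- M is positive definite, hence invertible
  have hMpd : M.PosDef := by
    rw [posDef_iff_dotProduct_mulVec]
    constructor
    · rw [Matrix.IsHermitian, conjTranspose_eq_transpose_of_trivial, hTM]
    · intro x hx
      have hxx : 0 < x ⬝ᵥ x :=
        lt_of_le_of_ne (dot_self_nonneg' x) fun h => hx (dotProduct_self_eq_zero.mp h.symm)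
      have := hMlo x
      simpa using lt_of_lt_of_le (by positivity : (0:ℝ) < (n₁+n₂)*lo*(x ⬝ᵥ x)) this
  have hdet : IsUnit M.det := hMpd.det_pos.ne'.isUnit
  have hb : M *ᵥ astar = n₁ • Δ₁ *ᵥ a₁ + n₂ • Δ₂ *ᵥ a₂ := by
    rw [hastar, mulVec_mulVec, Matrix.mul_nonsing_inv _ hdet, one_mulVec]
  have h1 : M *ᵥ v₁ = n₂ • Δ₂ *ᵥ u := by
    rw [hv₁, mulVec_sub, hb, hu, mulVec_sub, hMdef, add_mulVec, smul_mulVec,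
      smul_mulVec, smul_sub]
    abel
  have h2 : M *ᵥ v₂ = -(n₁ • Δ₁ *ᵥ u) := by
    rw [hv₂, mulVec_sub, hb, hu, mulVec_sub, hMdef, add_mulVec, smul_mulVec,
      smul_mulVec, smul_sub]
    abel
  -- key operator norm bound
  have key : ∀ v w : Fin d → ℝ, M *ᵥ v = w →
      w ⬝ᵥ w ≤ ((n₁ + n₂) * hi) ^ 2 * (v ⬝ᵥ v) := by
    intro v w hvw
    have hW : w ⬝ᵥ w = v ⬝ᵥ M *ᵥ w := by
      rw [hsym v w, ← hvw, dotProduct_comm]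
    have hcs := cs_form M hsym hMpos v w
    have hub1 := hMhi v
    have hub2 := hMhi w
    have hWnn := dot_self_nonneg' w
    have hVnn := dot_self_nonneg' v
    rcases eq_or_lt_of_le hWnn with hW0 | hWp
    · rw [← hW0]; positivity
    · have hsq : (w ⬝ᵥ w) ^ 2 ≤ ((n₁ + n₂) * hi) ^ 2 * (v ⬝ᵥ v) * (w ⬝ᵥ w) := by
        calc (w ⬝ᵥ w) ^ 2 = (v ⬝ᵥ M *ᵥ w) ^ 2 := by rw [hW]
        _ ≤ (v ⬝ᵥ M *ᵥ v) * (w ⬝ᵥ M *ᵥ w) := hcs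
        _ ≤ ((n₁ + n₂) * hi * (v ⬝ᵥ v)) * ((n₁ + n₂) * hi * (w ⬝ᵥ w)) := by
            have := hMpos v; have := hMpos w
            apply mul_le_mul hub1 hub2 (hMpos w) (by positivity)
        _ = ((n₁ + n₂) * hi) ^ 2 * (v ⬝ᵥ v) * (w ⬝ᵥ w) := by ring
      refine le_of_mul_le_mul_right ?_ hWp
      calc (w ⬝ᵥ w) * (w ⬝ᵥ w) = (w ⬝ᵥ w) ^ 2 := (sq (w ⬝ᵥ w)).symm
        _ ≤ ((n₁ + n₂) * hi) ^ 2 * (v ⬝ᵥ v) * (w ⬝ᵥ w) := hsq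
  set U := u ⬝ᵥ u with hU
  set V₁ := v₁ ⬝ᵥ v₁ with hV₁
  set V₂ := v₂ ⬝ᵥ v₂ with hV₂
  set W₁ := (Δ₁ *ᵥ u) ⬝ᵥ (Δ₁ *ᵥ u) with hW₁
  set W₂ := (Δ₂ *ᵥ u) ⬝ᵥ (Δ₂ *ᵥ u) with hW₂
  have hUnn : 0 ≤ U := hU ▸ dot_self_nonneg' u
  have hV₁nn : 0 ≤ V₁ := hV₁ ▸ dot_self_nonneg' v₁
  have hV₂nn : 0 ≤ V₂ := hV₂ ▸ dot_self_nonneg' v₂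
  have A2 : n₂ ^ 2 * W₂ ≤ ((n₁ + n₂) * hi) ^ 2 * V₁ := by
    have := key v₁ (n₂ • Δ₂ *ᵥ u) h1
    simpa [smul_dotProduct, dotProduct_smul, smul_eq_mul, hW₂, pow_two, mul_assoc] using this
  have A1 : n₁ ^ 2 * W₁ ≤ ((n₁ + n₂) * hi) ^ 2 * V₂ := by
    have := key v₂ (-(n₁ • Δ₁ *ᵥ u)) h2
    simpa [smul_dotProduct, dotProduct_smul, smul_eq_mul, hW₁, pow_two, mul_assoc] using this
  have B2 : lo ^ 2 * U ^ 2 ≤ U * W₂ := by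
    have hb1 := (hΔ₂Eig u).1
    have hcs := cs_dot' u (Δ₂ *ᵥ u)
    rw [← hU] at hb1 hcs
    rw [← hW₂] at hcs
    nlinarith [hb1, hcs, hUnn, mul_self_le_mul_self (mul_nonneg hlo.le hUnn) hb1]
  have B1 : lo ^ 2 * U ^ 2 ≤ U * W₁ := by
    have hb1 := (hΔ₁Eig u).1
    have hcs := cs_dot' u (Δ₁ *ᵥ u)
    rw [← hU] at hb1 hcs
    rw [← hW₁] at hcs
    nlinarith [hb1, hcs, hUnn, mul_self_le_mul_self (mul_nonneg hlo.le hUnn) hb1]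
  exact final_calc lo hi n₁ n₂ U V₁ V₂ W₁ W₂ hlo hhi hn₁ hn₂ hUnn hV₁nn hV₂nn A2 A1 B2 B1
end
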